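/- Let T ≤ SL(3,ℂ) be the subgroup generated by diag(1,-1,-1), diag(-1,1,-1), M_τ, let ω = ζ₃, and let O₁, O₂, O₃ be the T-orbits on ℙ² of [1:1:1], [1:ω:ω²], [1:ω²:ω] respectively. Then: every point [x:y:z] of O₂ ∪ O₃ satisfies x² + y² + z² = 0; every point [x:y:z] of O₁ ∪ O₃ satisfies ωx² − (1+ω)y² + z² = 0; and every point [x:y:z] of O₁ ∪ O₂ satisfies ωx² + y² − (1+ω)z² = 0. -/

import Mathlib

open Matrix Complex

noncomputable section

abbrev M3 : Type := Matrix (Fin 3) (Fin 3) ℂ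
abbrev SL3 : Type := Matrix.SpecialLinearGroup (Fin 3) ℂ
abbrev P2 : Type := Projectivization ℂ (Fin 3 → ℂ)

/-- The matrix `M_τ`. -/
def Mtau : M3 := !![0,1,0; 0,0,1; 1,0,0]

/-- `ζ_n = exp(2πi/n)`. -/
def zeta (n : ℕ) : ℂ := Complex.exp (2 * Real.pi * Complex.I / n)

/-- The subgroup of `SL(3,ℂ)` generated by a given set of matrices. -/
def genSL (s : Set M3) : Subgroup SL3 :=
  Subgroup.closure { g : SL3 | (g : M3) ∈ s }

/-- The orbit of a point of `ℙ²` under a set of (invertible) matrices,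
acting by `[v] ↦ [g·v]`. -/
def projOrbit (G : Set M3) (p : P2) : Set P2 :=
  { q | ∃ g ∈ G, ∃ h : g.mulVec p.rep ≠ 0, Projectivization.mk ℂ (g.mulVec p.rep) h = q }

/-- The orbit of a point of `ℙ²` under a subgroup of `SL(3,ℂ)`. -/
def projOrbitSL (G : Subgroup SL3) (p : P2) : Set P2 :=
  projOrbit ((fun g : SL3 => (g : M3)) '' (G : Set SL3)) p

/-- The point `[x:y:z] ∈ ℙ²`. -/
def pt (x y z : ℂ) (h : ![x,y,z] ≠ 0) : P2 := Projectivization.mk ℂ ![x,y,z] h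

lemma vne₀ {x y z : ℂ} (hx : x ≠ 0) : ![x,y,z] ≠ 0 := by
  intro h; exact hx (by simpa using congrFun h 0)

lemma vne₁ {x y z : ℂ} (hy : y ≠ 0) : ![x,y,z] ≠ 0 := by
  intro h; exact hy (by simpa using congrFun h 1)

lemma vne₂ {x y z : ℂ} (hz : z ≠ 0) : ![x,y,z] ≠ 0 := by
  intro h; exact hz (by simpa using congrFun h 2)

/-- No three distinct points of `P` are collinear. -/
def NoThreeCollinear (P : Set P2) : Prop :=
  ∀ p q r, p ∈ P → q ∈ P → r ∈ P → p ≠ q → p ≠ r → q ≠ r →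
    LinearIndependent ℂ ![p.rep, q.rep, r.rep]

/-- The points of `P` all lie on a conic. -/
def LiesOnConic (P : Set P2) : Prop :=
  ∃ Q : QuadraticForm ℂ (Fin 3 → ℂ), Q ≠ 0 ∧ ∀ p ∈ P, Q p.rep = 0

/-- The subgroup of `SL(3,ℂ)` generated by `diag(1,-1,-1)`, `diag(-1,1,-1)` and `M_τ`. -/
def TA4 : Subgroup SL3 :=
  genSL {Matrix.diagonal ![1, -1, -1], Matrix.diagonal ![-1, 1, -1], Mtau}

/-- The three orbits `O₁`, `O₂`, `O₃` of `[1:1:1]`, `[1:ω:ω²]`, `[1:ω²:ω]` (with `ω = ζ₃`). -/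
def O₁ : Set P2 := projOrbitSL TA4 (pt 1 1 1 (vne₀ one_ne_zero))
def O₂ : Set P2 := projOrbitSL TA4 (pt 1 (zeta 3) (zeta 3 ^ 2) (vne₀ one_ne_zero))
def O₃ : Set P2 := projOrbitSL TA4 (pt 1 (zeta 3 ^ 2) (zeta 3) (vne₀ one_ne_zero))



/-- A diagonal quadratic form as a plain function. -/
def Quad (a b c : ℂ) (v : Fin 3 → ℂ) : ℂ := a * v 0 ^ 2 + b * v 1 ^ 2 + c * v 2 ^ 2

lemma Quad_vec (a b c x y z : ℂ) : Quad a b c ![x,y,z] = a*x^2 + b*y^2 + c*z^2 := by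
  simp [Quad]

lemma Quad_smul (a b c k : ℂ) (v : Fin 3 → ℂ) :
    Quad a b c (k • v) = k ^ 2 * Quad a b c v := by
  simp only [Quad, Pi.smul_apply, smul_eq_mul]; ring

lemma Quad_diag1 (a b c : ℂ) (v : Fin 3 → ℂ) :
    Quad a b c ((Matrix.diagonal ![(1:ℂ), -1, -1]).mulVec v) = Quad a b c v := by
  simp only [Quad, Matrix.mulVec_diagonal]
  norm_num
  left; simp [Matrix.vecHead, Matrix.vecTail]

lemma Quad_diag2 (a b c : ℂ) (v : Fin 3 → ℂ) :
    Quad a b c ((Matrix.diagonal ![(-1:ℂ), 1, -1]).mulVec v) = Quad a b c v := by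
  simp only [Quad, Matrix.mulVec_diagonal]
  norm_num
  left; simp [Matrix.vecHead, Matrix.vecTail]

lemma Quad_tau (a b c : ℂ) (v : Fin 3 → ℂ) :
    Quad a b c (Mtau.mulVec v) = a * v 1 ^ 2 + b * v 2 ^ 2 + c * v 0 ^ 2 := by
  simp [Quad, Mtau, Matrix.mulVec, dotProduct, Fin.sum_univ_three, Matrix.vecHead, Matrix.vecTail]

/-- Invariance of a diagonal quadratic (up to nonzero scalar) under the whole group `TA4`,
given invariance up to scalar `s` under `Mtau`. -/
lemma Quad_TA4 (a b c s : ℂ) (hs : s ≠ 0)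
    (hτ : ∀ v, Quad a b c (Mtau.mulVec v) = s * Quad a b c v) :
    ∀ g ∈ TA4, ∃ t : ℂ, t ≠ 0 ∧
      ∀ v, Quad a b c ((g : M3).mulVec v) = t * Quad a b c v := by
  intro g hg
  unfold TA4 genSL at hg
  induction hg using Subgroup.closure_induction with
  | mem x hx =>
    rcases hx with h | h | h
    · exact ⟨1, one_ne_zero, fun v => by rw [h, Quad_diag1, one_mul]⟩
    · exact ⟨1, one_ne_zero, fun v => by rw [h, Quad_diag2, one_mul]⟩
    · exact ⟨s, hs, fun v => by rw [h, hτ]⟩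
  | one =>
    exact ⟨1, one_ne_zero, fun v => by
      rw [Matrix.SpecialLinearGroup.coe_one, Matrix.one_mulVec, one_mul]⟩
  | mul x y hx hy ihx ihy =>
    obtain ⟨tx, htx, hx'⟩ := ihx
    obtain ⟨ty, hty, hy'⟩ := ihy
    refine ⟨tx * ty, mul_ne_zero htx hty, fun v => ?_⟩
    rw [Matrix.SpecialLinearGroup.coe_mul, ← Matrix.mulVec_mulVec, hx', hy']
    ring
  | inv x hx ihx =>
    obtain ⟨t, ht, hx'⟩ := ihx
    refine ⟨t⁻¹, inv_ne_zero ht, fun v => ?_⟩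
    have key : Quad a b c ((x : M3).mulVec (((x⁻¹ : SL3) : M3).mulVec v))
        = t * Quad a b c (((x⁻¹ : SL3) : M3).mulVec v) := hx' _
    rw [Matrix.mulVec_mulVec, ← Matrix.SpecialLinearGroup.coe_mul, mul_inv_cancel,
      Matrix.SpecialLinearGroup.coe_one, Matrix.one_mulVec] at key
    rw [key, ← mul_assoc, inv_mul_cancel₀ ht, one_mul]

lemma Quad_rep_of_mk {a b c : ℂ} {v : Fin 3 → ℂ} {hv : v ≠ 0} {q : P2}
    (hq : Projectivization.mk ℂ v hv = q) (h0 : Quad a b c v = 0) :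
    Quad a b c q.rep = 0 := by
  rw [← Projectivization.mk_rep q, Projectivization.mk_eq_mk_iff] at hq
  obtain ⟨u, hu⟩ := hq
  have h := congrArg (Quad a b c) hu
  rw [Units.smul_def, Quad_smul, h0] at h
  have hu2 : ((u : ℂ)) ^ 2 ≠ 0 := pow_ne_zero _ u.ne_zero
  exact (mul_eq_zero.mp h).resolve_left hu2

/-- Main workhorse: if a diagonal quadratic is `Mtau`-semi-invariant and vanishes at the
base point's defining vector, it vanishes on the rep of every point of the orbit. -/
lemma Quad_orbit (a b c s : ℂ) (hs : s ≠ 0)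
    (hτ : ∀ v, Quad a b c (Mtau.mulVec v) = s * Quad a b c v)
    (x y z : ℂ) (hv : ![x,y,z] ≠ 0) (h0 : Quad a b c ![x,y,z] = 0) :
    ∀ q ∈ projOrbitSL TA4 (pt x y z hv), Quad a b c q.rep = 0 := by
  intro q hq
  obtain ⟨m, hm, hne, hmk⟩ := hq
  obtain ⟨g, hg, rfl⟩ := hm
  obtain ⟨t, ht, hinv⟩ := Quad_TA4 a b c s hs hτ g hg
  have hrep0 : Quad a b c (Projectivization.rep (pt x y z hv)) = 0 :=
    Quad_rep_of_mk rfl h0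
  have hz : Quad a b c ((g : M3).mulVec (Projectivization.rep (pt x y z hv))) = 0 := by
    rw [hinv, hrep0, mul_zero]
  exact Quad_rep_of_mk hmk hz

lemma zeta3_cube : zeta 3 ^ 3 = 1 := by
  rw [zeta, ← Complex.exp_nat_mul]
  have h : (3:ℕ) * (2 * ↑Real.pi * Complex.I / (3:ℕ)) = 2 * ↑Real.pi * Complex.I := by
    push_cast; field_simp
  rw [h, Complex.exp_two_pi_mul_I]

lemma zeta3_ne_one : zeta 3 ≠ 1 := by
  intro h
  rw [zeta, Complex.exp_eq_one_iff] at h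
  obtain ⟨n, hn⟩ := h
  have hpi : (Real.pi : ℂ) ≠ 0 := by exact_mod_cast Real.pi_ne_zero
  have h2 : (2 * (Real.pi:ℂ) * Complex.I) ≠ 0 :=
    mul_ne_zero (mul_ne_zero two_ne_zero hpi) Complex.I_ne_zero
  have hmul : (2 * (Real.pi:ℂ) * Complex.I) * 1
      = (2 * (Real.pi:ℂ) * Complex.I) * (3 * n) := by
    push_cast at hn ⊢
    linear_combination 3 * hn
  have h3 : (1:ℂ) = 3 * n := mul_left_cancel₀ h2 hmul
  have h4 : (1:ℤ) = 3 * n := by exact_mod_cast h3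
  omega

lemma zeta3_sum : 1 + zeta 3 + zeta 3 ^ 2 = 0 := by
  have h := zeta3_cube
  have hne : zeta 3 - 1 ≠ 0 := sub_ne_zero.mpr zeta3_ne_one
  have h2 : (zeta 3 - 1) * (1 + zeta 3 + zeta 3 ^ 2) = 0 := by linear_combination h
  exact (mul_eq_zero.mp h2).resolve_left hne

/-- with `ω = ζ₃`, every point `[x:y:z]` of `O₂ ∪ O₃` satisfies
`x² + y² + z² = 0`; every point of `O₁ ∪ O₃` satisfies `ωx² − (1+ω)y² + z² = 0`; and every
point of `O₁ ∪ O₂` satisfies `ωx² + y² − (1+ω)z² = 0`. -/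
theorem statement9 :
    (∀ q ∈ O₂ ∪ O₃,
      (Projectivization.rep q 0) ^ 2 + (Projectivization.rep q 1) ^ 2 +
        (Projectivization.rep q 2) ^ 2 = 0) ∧
    (∀ q ∈ O₁ ∪ O₃,
      zeta 3 * (Projectivization.rep q 0) ^ 2 - (1 + zeta 3) * (Projectivization.rep q 1) ^ 2 +
        (Projectivization.rep q 2) ^ 2 = 0) ∧
    (∀ q ∈ O₁ ∪ O₂,
      zeta 3 * (Projectivization.rep q 0) ^ 2 + (Projectivization.rep q 1) ^ 2 -
        (1 + zeta 3) * (Projectivization.rep q 2) ^ 2 = 0) := by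
  set w := zeta 3 with hw
  have hsum : 1 + w + w ^ 2 = 0 := zeta3_sum
  have hcube : w ^ 3 = 1 := zeta3_cube
  have hwne : w ≠ 0 := by
    intro h; rw [h] at hcube; norm_num at hcube
  have hs2 : -(1 + w) ≠ 0 := by
    intro h
    have h2 : w ^ 2 = 0 := by linear_combination hsum + h
    exact hwne ((pow_eq_zero_iff (two_ne_zero)).mp h2)
  have H1 := Quad_orbit 1 1 1 1 one_ne_zero
    (fun v => by rw [Quad_tau]; simp only [Quad]; ring)
  have H2 := Quad_orbit w (-(1+w)) 1 (-(1+w)) hs2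
    (fun v => by rw [Quad_tau]; simp only [Quad]
                 linear_combination (v 0 ^ 2 - v 1 ^ 2) * hsum)
  have H3 := Quad_orbit w 1 (-(1+w)) w hwne
    (fun v => by rw [Quad_tau]; simp only [Quad]
                 linear_combination (v 2 ^ 2 - v 0 ^ 2) * hsum)
  refine ⟨?_, ?_, ?_⟩
  · rintro q (hq | hq)
    · have h := H1 1 w (w^2) (vne₀ one_ne_zero)
        (by rw [Quad_vec]; linear_combination hsum + w * hcube) q hq
      simp only [Quad] at h
      linear_combination h
    · have h := H1 1 (w^2) w (vne₀ one_ne_zero)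
        (by rw [Quad_vec]; linear_combination hsum + w * hcube) q hq
      simp only [Quad] at h
      linear_combination h
  · rintro q (hq | hq)
    · have h := H2 1 1 1 (vne₀ one_ne_zero)
        (by rw [Quad_vec]; ring) q hq
      simp only [Quad] at h
      linear_combination h
    · have h := H2 1 (w^2) w (vne₀ one_ne_zero)
        (by rw [Quad_vec]; linear_combination (-(w + w^2)) * hcube) q hq
      simp only [Quad] at h
      linear_combination h
  · rintro q (hq | hq)
    · have h := H3 1 1 1 (vne₀ one_ne_zero)
        (by rw [Quad_vec]; ring) q hq
      simp only [Quad] at h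
      linear_combination h
    · have h := H3 1 w (w^2) (vne₀ one_ne_zero)
        (by rw [Quad_vec]; linear_combination (-(w + w^2)) * hcube) q hq
      simp only [Quad] at h
      linear_combination h
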